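/- Let K be a field, r ≥ 1, and let a, b : ℕʳ → K be r-sequences with a C-finite and b rational. Then the Hadamard product ab : ℕʳ → K, defined by (ab)(n) = a(n)·b(n), is rational. -/

import Mathlib

/-- The Hilbert series of an `r`-sequence `a : ℕʳ → K`, i.e. the multivariate formal
power series `Σ_{n ∈ ℕʳ} a(n)·t₁^{n₁}⋯t_r^{n_r}`. -/
def hilbertSeries {K : Type*} [Field K] {r : ℕ} (a : (Fin r → ℕ) → K) :
    MvPowerSeries (Fin r) K :=
  fun d => a d

/-- The shift `Sᵐa` of an `r`-sequence `a : ℕʳ → K` by `m ∈ ℕʳ`: `n ↦ a (n + m)`. -/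
def mshift {K : Type*} [Field K] {r : ℕ} (a : (Fin r → ℕ) → K) (m : Fin r → ℕ) :
    (Fin r → ℕ) → K :=
  fun n => a (n + m)

/-- An `r`-sequence is C-finite if the `K`-linear span of all its shifts `Sᵐa`, `m ∈ ℕʳ`,
inside `K^(ℕʳ)` is finite-dimensional. -/
def IsCFinite (K : Type*) [Field K] {r : ℕ} (a : (Fin r → ℕ) → K) : Prop :=
  FiniteDimensional K (Submodule.span K (Set.range (mshift a)))

/-- An `r`-sequence is rational if there are polynomials `P, Q ∈ K[t₁,…,t_r]` with `Q`
having nonzero constant term such that `H_a · Q = P` in `K[[t₁,…,t_r]]`. -/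
def IsRationalMSeq {K : Type*} [Field K] {r : ℕ} (a : (Fin r → ℕ) → K) : Prop :=
  ∃ P Q : MvPolynomial (Fin r) K, MvPolynomial.coeff 0 Q ≠ 0 ∧
    hilbertSeries a * (Q : MvPowerSeries (Fin r) K) = (P : MvPowerSeries (Fin r) K)

section Aux

open MvPolynomial Matrix Finset

variable {K : Type*} [Field K] {r d : ℕ}

lemma coeff_hilbertSeries (x : (Fin r → ℕ) → K) (e : Fin r →₀ ℕ) :
    MvPowerSeries.coeff e (hilbertSeries x) = x ⇑e := rfl

/-- The matrix polynomial `R(t₁A₁,…,t_rA_r)` (entrywise, as a matrix over `K[t]`). -/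
noncomputable def polyMat (A : (Fin r → ℕ) → Matrix (Fin d) (Fin d) K)
    (R : MvPolynomial (Fin r) K) : Matrix (Fin d) (Fin d) (MvPolynomial (Fin r) K) :=
  Matrix.of fun j k => ∑ m ∈ R.support, monomial m (R.coeff m * A ⇑m j k)

lemma coeff_polyMat (A : (Fin r → ℕ) → Matrix (Fin d) (Fin d) K)
    (R : MvPolynomial (Fin r) K) (j k : Fin d) (u : Fin r →₀ ℕ) :
    (polyMat A R j k).coeff u = R.coeff u * A ⇑u j k := by
  classical
  rw [polyMat, Matrix.of_apply, MvPolynomial.coeff_sum]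
  rw [Finset.sum_congr rfl (fun m _ => MvPolynomial.coeff_monomial u m _)]
  rw [Finset.sum_ite_eq']
  by_cases hu : u ∈ R.support
  · rw [if_pos hu]
  · rw [if_neg hu, MvPolynomial.notMem_support_iff.mp hu, zero_mul]

theorem aux_rational (A : (Fin r → ℕ) → Matrix (Fin d) (Fin d) K)
    (hA0 : A 0 = 1) (hAmul : ∀ u v, A (u + v) = A u * A v)
    (b : (Fin r → ℕ) → K) (hb : IsRationalMSeq b) (w c : Fin d → K) :
    IsRationalMSeq (fun n => (∑ j, ∑ l, w j * c l * A n j l) * b n) := by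
  classical
  obtain ⟨P0, Q0, hQ0, hPQ⟩ := hb
  set φ : MvPolynomial (Fin r) K →+* MvPowerSeries (Fin r) K :=
    MvPolynomial.coeToMvPowerSeries.ringHom with hφdef
  set Φ : Matrix (Fin d) (Fin d) (MvPowerSeries (Fin r) K) :=
    Matrix.of (fun j k => hilbertSeries (fun n => b n * A n j k)) with hΦ
  have claim1 : Φ * (polyMat A Q0).map φ = (polyMat A P0).map φ := by
    ext j l e
    have he : ∀ p : (Fin r →₀ ℕ) × (Fin r →₀ ℕ), p ∈ Finset.HasAntidiagonal.antidiagonal e →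
        (⇑p.1 + ⇑p.2 : Fin r → ℕ) = ⇑e := by
      intro p hp
      rw [Finset.HasAntidiagonal.mem_antidiagonal] at hp
      rw [← Finsupp.coe_add, hp]
    rw [Matrix.mul_apply, Matrix.map_apply, map_sum]
    calc ∑ k, MvPowerSeries.coeff e (Φ j k * (polyMat A Q0).map φ k l)
        = ∑ k, ∑ p ∈ Finset.HasAntidiagonal.antidiagonal e,
            (b ⇑p.1 * A ⇑p.1 j k) * (Q0.coeff p.2 * A ⇑p.2 k l) := by
          refine Finset.sum_congr rfl fun k _ => ?_
          rw [MvPowerSeries.coeff_mul]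
          refine Finset.sum_congr rfl fun p _ => ?_
          rw [hΦ, Matrix.of_apply, coeff_hilbertSeries, Matrix.map_apply, hφdef,
            MvPolynomial.coeToMvPowerSeries.ringHom_apply, MvPolynomial.coeff_coe,
            coeff_polyMat]
      _ = ∑ p ∈ Finset.HasAntidiagonal.antidiagonal e, (b ⇑p.1 * Q0.coeff p.2) * A ⇑e j l := by
          rw [Finset.sum_comm]
          refine Finset.sum_congr rfl fun p hp => ?_
          rw [← he p hp, hAmul, Matrix.mul_apply, Finset.mul_sum]
          refine Finset.sum_congr rfl fun k _ => ?_
          ring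
      _ = P0.coeff e * A ⇑e j l := by
          rw [← Finset.sum_mul]
          congr 1
          have := congrArg (MvPowerSeries.coeff e) hPQ
          rw [MvPowerSeries.coeff_mul, MvPolynomial.coeff_coe] at this
          rw [← this]
          refine Finset.sum_congr rfl fun p _ => ?_
          rw [coeff_hilbertSeries, MvPolynomial.coeff_coe]
      _ = MvPowerSeries.coeff e ((polyMat A P0).map φ j l) := by
          rw [Matrix.map_apply, hφdef, MvPolynomial.coeToMvPowerSeries.ringHom_apply,
            MvPolynomial.coeff_coe, coeff_polyMat]
  have claim2 : ∀ j l, Φ j l * φ (polyMat A Q0).det =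
      φ ((polyMat A P0 * adjugate (polyMat A Q0)) j l) := by
    intro j l
    have h : Φ * ((polyMat A Q0 * adjugate (polyMat A Q0)).map φ) =
        (polyMat A P0 * adjugate (polyMat A Q0)).map φ := by
      rw [Matrix.map_mul, ← Matrix.mul_assoc, claim1, ← Matrix.map_mul]
    rw [Matrix.mul_adjugate] at h
    have h2 := congrFun (congrFun h j) l
    rw [Matrix.mul_apply, Matrix.map_apply] at h2
    rw [← h2]
    rw [Finset.sum_eq_single l]
    · simp
    · intro k _ hk
      simp [Matrix.map_apply, Matrix.one_apply, hk]
    · simp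
  refine ⟨∑ j, ∑ l, (w j * c l) • ((polyMat A P0 * adjugate (polyMat A Q0)) j l),
    (polyMat A Q0).det, ?_, ?_⟩
  · have hdet : MvPolynomial.coeff 0 (polyMat A Q0).det =
        ((polyMat A Q0).map (MvPolynomial.constantCoeff)).det := by
      have h := RingHom.map_det (MvPolynomial.constantCoeff (σ := Fin r) (R := K))
        (polyMat A Q0)
      rw [RingHom.mapMatrix_apply, MvPolynomial.constantCoeff_eq] at h
      exact h
    rw [hdet]
    have hmap : (polyMat A Q0).map (MvPolynomial.constantCoeff) =
        (Q0.coeff 0) • (1 : Matrix (Fin d) (Fin d) K) := by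
      ext j k
      rw [Matrix.map_apply]
      show MvPolynomial.coeff 0 (polyMat A Q0 j k) = _
      rw [coeff_polyMat]
      simp [hA0, Matrix.smul_apply, Matrix.one_apply]
    rw [hmap, Matrix.det_smul, Matrix.det_one, mul_one]
    simpa using pow_ne_zero _ hQ0
  · have hdecomp : hilbertSeries (fun n => (∑ j, ∑ l, w j * c l * A n j l) * b n) =
        ∑ j, ∑ l, (w j * c l) • Φ j l := by
      apply MvPowerSeries.ext_iff.mpr
      intro e
      rw [coeff_hilbertSeries, map_sum]
      rw [Finset.sum_mul]
      refine Finset.sum_congr rfl fun j _ => ?_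
      rw [map_sum, Finset.sum_mul]
      refine Finset.sum_congr rfl fun l _ => ?_
      rw [MvPowerSeries.coeff_smul, hΦ, Matrix.of_apply, coeff_hilbertSeries]
      ring
    have hsmul : ∀ (k : K) (p : MvPolynomial (Fin r) K), φ (k • p) = k • φ p := by
      intro k p
      rw [MvPolynomial.smul_eq_C_mul, _root_.map_mul, hφdef,
        MvPolynomial.coeToMvPowerSeries.ringHom_apply, MvPolynomial.coe_C,
        ← MvPowerSeries.smul_eq_C_mul]
    rw [hdecomp]
    show (∑ j, ∑ l, (w j * c l) • Φ j l) * φ (polyMat A Q0).det =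
      φ (∑ j, ∑ l, (w j * c l) • ((polyMat A P0 * adjugate (polyMat A Q0)) j l))
    rw [map_sum, Finset.sum_mul]
    refine Finset.sum_congr rfl fun j _ => ?_
    rw [map_sum, Finset.sum_mul]
    refine Finset.sum_congr rfl fun l _ => ?_
    rw [smul_mul_assoc, claim2 j l, hsmul]

end Aux

/-- the Hadamard product of a C-finite `r`-sequence and a rational
`r`-sequence is rational. -/
theorem hadamard_cfinite_mul_rational {K : Type*} [Field K] {r : ℕ} (hr : 1 ≤ r)
    (a b : (Fin r → ℕ) → K) (ha : IsCFinite K a) (hb : IsRationalMSeq b) :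
    IsRationalMSeq (fun n => a n * b n) := by
  classical
  rw [IsCFinite] at ha
  set V : Submodule K ((Fin r → ℕ) → K) := Submodule.span K (Set.range (mshift a)) with hV
  haveI : FiniteDimensional K V := ha
  set d : ℕ := Module.finrank K V with hd
  let B : Module.Basis (Fin d) K V := Module.finBasis K V
  -- the shift linear map on the whole function space
  let SL : (Fin r → ℕ) → ((Fin r → ℕ) → K) →ₗ[K] ((Fin r → ℕ) → K) :=
    fun m => LinearMap.funLeft K K (fun n => n + m)
  have hSL : ∀ m (x : (Fin r → ℕ) → K) (n : Fin r → ℕ), SL m x n = x (n + m) := by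
    intro m x n; rfl
  have hmem : ∀ m, ∀ x ∈ V, SL m x ∈ V := by
    intro m x hx
    induction hx using Submodule.span_induction with
    | mem y hy =>
      obtain ⟨m', rfl⟩ := hy
      apply Submodule.subset_span
      refine ⟨m + m', ?_⟩
      funext n
      show a (n + (m + m')) = (mshift a m') (n + m)
      show a (n + (m + m')) = a (n + m + m')
      rw [add_assoc]
    | zero => simpa using V.zero_mem
    | add y z _ _ hy hz => rw [map_add]; exact V.add_mem hy hz
    | smul c y _ hy => rw [map_smul]; exact V.smul_mem c hy
  let T : (Fin r → ℕ) → (V →ₗ[K] V) := fun m => (SL m).restrict (hmem m)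
  have hTval : ∀ m (x : V) (n : Fin r → ℕ), ((T m x : V) : (Fin r → ℕ) → K) n = (x : (Fin r → ℕ) → K) (n + m) := by
    intro m x n; rfl
  let A : (Fin r → ℕ) → Matrix (Fin d) (Fin d) K := fun m => LinearMap.toMatrix B B (T m)
  have hA0 : A 0 = 1 := by
    have hT0 : T 0 = LinearMap.id := by
      ext x n
      rw [hTval]
      simp
    show LinearMap.toMatrix B B (T 0) = 1
    rw [hT0, LinearMap.toMatrix_id]
  have hAmul : ∀ u v, A (u + v) = A u * A v := by
    intro u v
    have hcomp : T (u + v) = (T u) ∘ₗ (T v) := by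
      ext x n
      show ((T (u + v) x : V) : (Fin r → ℕ) → K) n = ((T u (T v x) : V) : (Fin r → ℕ) → K) n
      rw [hTval, hTval, hTval, add_assoc]
    show LinearMap.toMatrix B B (T (u + v)) = _
    rw [hcomp, LinearMap.toMatrix_comp B B B]
  have haV : a ∈ V := by
    apply Submodule.subset_span
    refine ⟨0, ?_⟩
    funext n
    show a (n + 0) = a n
    simp
  let aV : V := ⟨a, haV⟩
  let w : Fin d → K := fun j => ((B j : V) : (Fin r → ℕ) → K) 0
  let cv : Fin d → K := fun l => B.repr aV l
  have hdecomp : ∀ e : Fin r → ℕ, a e = ∑ j, ∑ l, w j * cv l * A e j l := by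
    intro e
    have h1 : a e = ((T e aV : V) : (Fin r → ℕ) → K) 0 := by
      rw [hTval]
      show a e = a (0 + e)
      simp
    have h2 : T e aV = ∑ l, cv l • T e (B l) := by
      conv_lhs => rw [← B.sum_repr aV]
      rw [map_sum]
      refine Finset.sum_congr rfl fun l _ => ?_
      rw [map_smul]
    have h3 : ∀ l, T e (B l) = ∑ j, A e j l • B j := by
      intro l
      conv_lhs => rw [← B.sum_repr (T e (B l))]
      refine Finset.sum_congr rfl fun j _ => ?_
      congr 1
      exact (LinearMap.toMatrix_apply B B (T e) j l).symm
    have hcoe : ((∑ l, cv l • T e (B l) : V) : (Fin r → ℕ) → K) 0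
        = ∑ l, cv l * ((T e (B l) : V) : (Fin r → ℕ) → K) 0 := by
      rw [AddSubmonoidClass.coe_finset_sum, Finset.sum_apply]
      refine Finset.sum_congr rfl fun l _ => ?_
      rw [Submodule.coe_smul, Pi.smul_apply, smul_eq_mul]
    have hcoe2 : ∀ l, ((∑ j, A e j l • B j : V) : (Fin r → ℕ) → K) 0
        = ∑ j, A e j l * ((B j : V) : (Fin r → ℕ) → K) 0 := by
      intro l
      rw [AddSubmonoidClass.coe_finset_sum, Finset.sum_apply]
      refine Finset.sum_congr rfl fun j _ => ?_
      rw [Submodule.coe_smul, Pi.smul_apply, smul_eq_mul]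
    rw [h1, h2, hcoe, Finset.sum_comm]
    refine Finset.sum_congr rfl fun l _ => ?_
    rw [h3 l, hcoe2 l, Finset.mul_sum]
    refine Finset.sum_congr rfl fun j _ => ?_
    show cv l * (A e j l * w j) = w j * cv l * A e j l
    ring
  have hfun : (fun n => a n * b n) = fun n => (∑ j, ∑ l, w j * cv l * A n j l) * b n := by
    funext n
    rw [← hdecomp n]
  rw [hfun]
  exact aux_rational A hA0 hAmul b hb w cv
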